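/- Let A and B be groups, n ≥ 2, and let G_n = A(n)B be their n-th nilpotent product. Then the centralizers C_A(B) and C_B(A) are normal subgroups of G_n. -/

import Mathlib

open Monoid

section NilpotentProduct

variable (A B : Type*) [Group A] [Group B] (n : ℕ)

/-- The Cartesian subgroup `[A,B]` of the free product `A ∗ B`: the kernel of the
natural homomorphism `A ∗ B →* A × B`. -/
def cartesianSubgroup : Subgroup (Coprod A B) := MonoidHom.ker (Coprod.toProd)

/-- The normal subgroup `[A,B] ∩ γ_{n+1}(A ∗ B)` defining the `n`-th nilpotent product.
(Here `lowerCentralSeries H n = γ_{n+1}(H)` since Mathlib's indexing starts at `0`.) -/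
def nilProdKer : Subgroup (Coprod A B) :=
  cartesianSubgroup A B ⊓ (⊤ : Subgroup (Coprod A B)).lowerCentralSeries n

instance : (nilProdKer A B n).Normal := by
  have h1 : (cartesianSubgroup A B).Normal := MonoidHom.normal_ker _
  have h2 : ((⊤ : Subgroup (Coprod A B)).lowerCentralSeries n).Normal := inferInstance
  exact Subgroup.normal_inf_normal _ _

/-- The `n`-th nilpotent product `A(n)B = (A ∗ B) / ([A,B] ∩ γ_{n+1}(A ∗ B))`. -/
abbrev NilProd := Coprod A B ⧸ nilProdKer A B n

/-- The canonical embedding of `A` into `A(n)B`. -/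
def nilProdInl : A →* NilProd A B n := (QuotientGroup.mk' _).comp Coprod.inl

/-- The canonical embedding of `B` into `A(n)B`. -/
def nilProdInr : B →* NilProd A B n := (QuotientGroup.mk' _).comp Coprod.inr

/-- `C_A(B)`: the centralizer of `B` in `A`, as a subgroup of `A(n)B`. -/
def CAB : Subgroup (NilProd A B n) :=
  (nilProdInl A B n).range ⊓ Subgroup.centralizer (Set.range (nilProdInr A B n))

/-- `C_B(A)`: the centralizer of `A` in `B`, as a subgroup of `A(n)B`. -/
def CBA : Subgroup (NilProd A B n) :=
  (nilProdInr A B n).range ⊓ Subgroup.centralizer (Set.range (nilProdInl A B n))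

end NilpotentProduct

section NilpotentProductAux

open scoped commutatorElement

variable (A B : Type*) [Group A] [Group B] (n : ℕ)

lemma key_inl (a : A)
    (ha : ∀ b : B, ⁅(Coprod.inl a : Coprod A B), Coprod.inr b⁆ ∈ nilProdKer A B n)
    (a' : A) (b : B) :
    ⁅(Coprod.inl (a' * a * a'⁻¹) : Coprod A B), Coprod.inr b⁆ ∈ nilProdKer A B n := by
  set g : Coprod A B := Coprod.inl a' with hg
  set φ : Coprod A B →* Coprod A B :=
    Coprod.lift Coprod.inl ((MulAut.conj g⁻¹).toMonoidHom.comp Coprod.inr) with hφ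
  have hφγ : φ ⁅(Coprod.inl a : Coprod A B), Coprod.inr b⁆ ∈ (⊤ : Subgroup (Coprod A B)).lowerCentralSeries n :=
    lowerCentralSeries.map φ n ⟨_, (ha b).2, rfl⟩
  have hφl : φ (Coprod.inl a) = Coprod.inl a := rfl
  have hφr : φ (Coprod.inr b) = g⁻¹ * Coprod.inr b * g := by
    rw [hφ, Coprod.lift_apply_inr]; simp [MulAut.conj_apply]
  have heq : ⁅(Coprod.inl (a' * a * a'⁻¹) : Coprod A B), Coprod.inr b⁆
      = g * φ ⁅(Coprod.inl a : Coprod A B), Coprod.inr b⁆ * g⁻¹ := by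
    rw [map_commutatorElement, hφl, hφr, commutatorElement_def, commutatorElement_def,
      map_mul, map_mul, map_inv, ← hg]
    group
  refine Subgroup.mem_inf.mpr ⟨?_, ?_⟩
  · show _ ∈ MonoidHom.ker _
    rw [MonoidHom.mem_ker, map_commutatorElement, commutatorElement_eq_one_iff_commute]
    show Commute ((a' * a * a'⁻¹ : A), (1 : B)) ((1 : A), (b : B))
    simp [Commute, SemiconjBy, Prod.ext_iff]
  · rw [heq]
    exact (inferInstance : ((⊤ : Subgroup (Coprod A B)).lowerCentralSeries n).Normal).conj_mem _ hφγ g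

lemma key_inr (b : B)
    (hb : ∀ a : A, ⁅(Coprod.inr b : Coprod A B), Coprod.inl a⁆ ∈ nilProdKer A B n)
    (b' : B) (a : A) :
    ⁅(Coprod.inr (b' * b * b'⁻¹) : Coprod A B), Coprod.inl a⁆ ∈ nilProdKer A B n := by
  set g : Coprod A B := Coprod.inr b' with hg
  set φ : Coprod A B →* Coprod A B :=
    Coprod.lift ((MulAut.conj g⁻¹).toMonoidHom.comp Coprod.inl) Coprod.inr with hφ
  have hφγ : φ ⁅(Coprod.inr b : Coprod A B), Coprod.inl a⁆ ∈ (⊤ : Subgroup (Coprod A B)).lowerCentralSeries n :=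
    lowerCentralSeries.map φ n ⟨_, (hb a).2, rfl⟩
  have hφl : φ (Coprod.inr b) = Coprod.inr b := rfl
  have hφr : φ (Coprod.inl a) = g⁻¹ * Coprod.inl a * g := by
    rw [hφ, Coprod.lift_apply_inl]; simp [MulAut.conj_apply]
  have heq : ⁅(Coprod.inr (b' * b * b'⁻¹) : Coprod A B), Coprod.inl a⁆
      = g * φ ⁅(Coprod.inr b : Coprod A B), Coprod.inl a⁆ * g⁻¹ := by
    rw [map_commutatorElement, hφl, hφr, commutatorElement_def, commutatorElement_def,
      map_mul, map_mul, map_inv, ← hg]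
    group
  refine Subgroup.mem_inf.mpr ⟨?_, ?_⟩
  · show _ ∈ MonoidHom.ker _
    rw [MonoidHom.mem_ker, map_commutatorElement, commutatorElement_eq_one_iff_commute]
    show Commute ((1 : A), (b' * b * b'⁻¹ : B)) ((a : A), (1 : B))
    simp [Commute, SemiconjBy, Prod.ext_iff]
  · rw [heq]
    exact (inferInstance : ((⊤ : Subgroup (Coprod A B)).lowerCentralSeries n).Normal).conj_mem _ hφγ g

lemma mk_inl_eq (a : A) :
    (QuotientGroup.mk (Coprod.inl a) : NilProd A B n) = nilProdInl A B n a := rfl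

lemma mk_inr_eq (b : B) :
    (QuotientGroup.mk (Coprod.inr b) : NilProd A B n) = nilProdInr A B n b := rfl

lemma commute_of_mem_ker {u v : Coprod A B} (h : ⁅u, v⁆ ∈ nilProdKer A B n) :
    Commute (QuotientGroup.mk u : NilProd A B n) (QuotientGroup.mk v) := by
  rw [← commutatorElement_eq_one_iff_commute]
  have : (QuotientGroup.mk ⁅u, v⁆ : NilProd A B n)
      = ⁅(QuotientGroup.mk u : NilProd A B n), QuotientGroup.mk v⁆ :=
    map_commutatorElement (QuotientGroup.mk' (nilProdKer A B n)) u v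
  rw [← this, QuotientGroup.eq_one_iff]
  exact h

lemma mem_ker_of_commute {u v : Coprod A B}
    (h : Commute (QuotientGroup.mk u : NilProd A B n) (QuotientGroup.mk v)) :
    ⁅u, v⁆ ∈ nilProdKer A B n := by
  rw [← QuotientGroup.eq_one_iff]
  have : (QuotientGroup.mk ⁅u, v⁆ : NilProd A B n)
      = ⁅(QuotientGroup.mk u : NilProd A B n), QuotientGroup.mk v⁆ :=
    map_commutatorElement (QuotientGroup.mk' (nilProdKer A B n)) u v
  rw [this, commutatorElement_eq_one_iff_commute]
  exact h

lemma conj_mem_CAB (w : Coprod A B) :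
    ∀ x ∈ CAB A B n, (QuotientGroup.mk w : NilProd A B n) * x * (QuotientGroup.mk w : NilProd A B n)⁻¹
      ∈ CAB A B n := by
  induction w using Coprod.induction_on with
  | inl a' =>
    rintro x hx
    obtain ⟨hr, hc⟩ := Subgroup.mem_inf.mp hx
    obtain ⟨a, rfl⟩ := hr
    have hc' := Subgroup.mem_centralizer_iff.mp hc
    have ha : ∀ b : B, ⁅(Coprod.inl a : Coprod A B), Coprod.inr b⁆ ∈ nilProdKer A B n := by
      intro b
      refine mem_ker_of_commute A B n ?_
      rw [mk_inl_eq, mk_inr_eq]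
      exact (hc' _ ⟨b, rfl⟩).symm
    rw [mk_inl_eq]
    have hz : nilProdInl A B n a' * nilProdInl A B n a * (nilProdInl A B n a')⁻¹
        = nilProdInl A B n (a' * a * a'⁻¹) := by
      rw [map_mul, map_mul, map_inv]
    rw [hz]
    refine Subgroup.mem_inf.mpr ⟨⟨_, rfl⟩, ?_⟩
    refine Subgroup.mem_centralizer_iff.mpr ?_
    rintro y ⟨b, rfl⟩
    have := commute_of_mem_ker A B n (key_inl A B n a ha a' b)
    rw [mk_inl_eq, mk_inr_eq] at this
    exact this.symm
  | inr b' =>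
    intro x hx
    obtain ⟨hr, hc⟩ := Subgroup.mem_inf.mp hx
    have hc' := Subgroup.mem_centralizer_iff.mp hc
    have h := hc' _ ⟨b', rfl⟩
    rw [mk_inr_eq]
    have : nilProdInr A B n b' * x * (nilProdInr A B n b')⁻¹ = x := by
      rw [h, mul_inv_cancel_right]
    rw [this]
    exact hx
  | mul u v hu hv =>
    intro x hx
    have h2 : (QuotientGroup.mk (u * v) : NilProd A B n) * x * (QuotientGroup.mk (u * v) : NilProd A B n)⁻¹
        = (QuotientGroup.mk u : NilProd A B n) *
          ((QuotientGroup.mk v : NilProd A B n) * x * (QuotientGroup.mk v : NilProd A B n)⁻¹) *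
          (QuotientGroup.mk u : NilProd A B n)⁻¹ := by
      rw [QuotientGroup.mk_mul]
      group
    rw [h2]
    exact hu _ (hv x hx)

lemma conj_mem_CBA (w : Coprod A B) :
    ∀ x ∈ CBA A B n, (QuotientGroup.mk w : NilProd A B n) * x * (QuotientGroup.mk w : NilProd A B n)⁻¹
      ∈ CBA A B n := by
  induction w using Coprod.induction_on with
  | inr b' =>
    rintro x hx
    obtain ⟨hr, hc⟩ := Subgroup.mem_inf.mp hx
    obtain ⟨b, rfl⟩ := hr
    have hc' := Subgroup.mem_centralizer_iff.mp hc
    have hb : ∀ a : A, ⁅(Coprod.inr b : Coprod A B), Coprod.inl a⁆ ∈ nilProdKer A B n := by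
      intro a
      refine mem_ker_of_commute A B n ?_
      rw [mk_inl_eq, mk_inr_eq]
      exact (hc' _ ⟨a, rfl⟩).symm
    rw [mk_inr_eq]
    have hz : nilProdInr A B n b' * nilProdInr A B n b * (nilProdInr A B n b')⁻¹
        = nilProdInr A B n (b' * b * b'⁻¹) := by
      rw [map_mul, map_mul, map_inv]
    rw [hz]
    refine Subgroup.mem_inf.mpr ⟨⟨_, rfl⟩, ?_⟩
    refine Subgroup.mem_centralizer_iff.mpr ?_
    rintro y ⟨a, rfl⟩
    have := commute_of_mem_ker A B n (key_inr A B n b hb b' a)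
    rw [mk_inl_eq, mk_inr_eq] at this
    exact this.symm
  | inl a' =>
    intro x hx
    obtain ⟨hr, hc⟩ := Subgroup.mem_inf.mp hx
    have hc' := Subgroup.mem_centralizer_iff.mp hc
    have h := hc' _ ⟨a', rfl⟩
    rw [mk_inl_eq]
    have : nilProdInl A B n a' * x * (nilProdInl A B n a')⁻¹ = x := by
      rw [h, mul_inv_cancel_right]
    rw [this]
    exact hx
  | mul u v hu hv =>
    intro x hx
    have h2 : (QuotientGroup.mk (u * v) : NilProd A B n) * x * (QuotientGroup.mk (u * v) : NilProd A B n)⁻¹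
        = (QuotientGroup.mk u : NilProd A B n) *
          ((QuotientGroup.mk v : NilProd A B n) * x * (QuotientGroup.mk v : NilProd A B n)⁻¹) *
          (QuotientGroup.mk u : NilProd A B n)⁻¹ := by
      rw [QuotientGroup.mk_mul]
      group
    rw [h2]
    exact hu _ (hv x hx)

end NilpotentProductAux

/-- Lemma 1(ii): `C_A(B)` and `C_B(A)` are normal subgroups of `G_n = A(n)B`. -/
theorem centralizers_normal (A B : Type*) [Group A] [Group B] (n : ℕ) (hn : 2 ≤ n) :
    (CAB A B n).Normal ∧ (CBA A B n).Normal := by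
  constructor
  · refine ⟨fun x hx g => ?_⟩
    obtain ⟨w, rfl⟩ := QuotientGroup.mk_surjective g
    exact conj_mem_CAB A B n w x hx
  · refine ⟨fun x hx g => ?_⟩
    obtain ⟨w, rfl⟩ := QuotientGroup.mk_surjective g
    exact conj_mem_CBA A B n w x hx
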